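/- For the ℓ₂-ℓ₂ dynamic estimator with sampling probabilities p_i = ‖A_{i:}‖₂|y_i − (y₀)_i| / ∑_{i'}‖A_{i':}‖₂|y_{i'} − (y₀)_{i'}| and q_j = ‖A_{:j}‖₂|x_j − (x₀)_j| / ∑_{j'}‖A_{:j'}‖₂|x_{j'} − (x₀)_{j'}|, the expected squared deviation satisfies E‖g̃(w) − g(w₀)‖₂² = (∑_i ‖A_{i:}‖₂|y_i − (y₀)_i|)² + (∑_j ‖A_{:j}‖₂|x_j − (x₀)_j|)² ≤ ‖A‖_F²(‖y − y₀‖₂² + ‖x − x₀‖₂²). -/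

import Mathlib

noncomputable def l2sq {d : ℕ} (v : Fin d → ℝ) : ℝ := ∑ i, v i ^ 2

noncomputable def l2norm {d : ℕ} (v : Fin d → ℝ) : ℝ := Real.sqrt (∑ i, v i ^ 2)

lemma l2sq_nonneg {d : ℕ} (v : Fin d → ℝ) : 0 ≤ l2sq v :=
  Finset.sum_nonneg fun i _ => sq_nonneg _

lemma l2norm_eq {d : ℕ} (v : Fin d → ℝ) : l2norm v = Real.sqrt (l2sq v) := rfl

lemma l2sq_smul {d : ℕ} (r : ℝ) (v : Fin d → ℝ) : l2sq (r • v) = r ^ 2 * l2sq v := by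
  simp [l2sq, Finset.mul_sum, mul_pow]

lemma key_term {k : ℕ} (N : Fin k → ℝ) (hN : ∀ i, 0 ≤ N i) (d : Fin k → ℝ)
    (i : Fin k) :
    (Real.sqrt (N i) * |d i| / ∑ i', Real.sqrt (N i') * |d i'|) *
      ((d i / (Real.sqrt (N i) * |d i| / ∑ i', Real.sqrt (N i') * |d i'|)) ^ 2 * N i)
      = (Real.sqrt (N i) * |d i|) * ∑ i', Real.sqrt (N i') * |d i'| := by
  set S := ∑ i', Real.sqrt (N i') * |d i'| with hS
  set c := Real.sqrt (N i) * |d i| with hc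
  by_cases hc0 : c = 0
  · simp [hc0]
  · by_cases hS0 : S = 0
    · simp [hS0]
    · have hp : c / S ≠ 0 := div_ne_zero hc0 hS0
      have hNi : Real.sqrt (N i) ^ 2 = N i := Real.sq_sqrt (hN i)
      have hd2 : |d i| ^ 2 = d i ^ 2 := sq_abs _
      have hsq : (Real.sqrt (N i) * |d i|) ^ 2 = N i * d i ^ 2 := by
        rw [mul_pow, hNi, hd2]
      field_simp
      linear_combination (-1 : ℝ) * hsq

/-- the ℓ₂-ℓ₂ dynamic estimator with probabilities
`p_i ∝ ‖A_{i:}‖₂ |y_i − y₀ᵢ|`, `q_j ∝ ‖A_{:j}‖₂ |x_j − x₀ⱼ|` satisfies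
`E‖g̃(w) − g(w₀)‖₂² = (∑_i ‖A_{i:}‖₂|y_i − y₀ᵢ|)² + (∑_j ‖A_{:j}‖₂|x_j − x₀ⱼ|)²
 ≤ ‖A‖_F² (‖y − y₀‖₂² + ‖x − x₀‖₂²)`. -/
theorem l2_l2_dynamic_estimator {m n : ℕ}
    (A : Matrix (Fin m) (Fin n) ℝ)
    (x x₀ : Fin n → ℝ) (y y₀ : Fin m → ℝ)
    (p : Fin m → ℝ)
    (hp : ∀ i, p i = l2norm (A i) * |y i - y₀ i| /
      ∑ i', l2norm (A i') * |y i' - y₀ i'|)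
    (q : Fin n → ℝ)
    (hq : ∀ j, q j = l2norm (fun i => A i j) * |x j - x₀ j| /
      ∑ j', l2norm (fun i => A i j') * |x j' - x₀ j'|)
    (Gx : Fin m → Fin n → ℝ) (Gy : Fin n → Fin m → ℝ)
    (hGx : ∀ i, Gx i =
      (fun k => ∑ i', A i' k * y₀ i') + ((y i - y₀ i) / p i) • A i)
    (hGy : ∀ j, Gy j =
      (fun i => -∑ j', A i j' * x₀ j') - ((x j - x₀ j) / q j) • (fun i => A i j)) :
    (∑ i, p i * l2sq (Gx i - fun k => ∑ i', A i' k * y₀ i') +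
      ∑ j, q j * l2sq (Gy j - fun i' => -∑ j', A i' j' * x₀ j') =
      (∑ i, l2norm (A i) * |y i - y₀ i|) ^ 2 +
        (∑ j, l2norm (fun i => A i j) * |x j - x₀ j|) ^ 2) ∧
    ((∑ i, l2norm (A i) * |y i - y₀ i|) ^ 2 +
        (∑ j, l2norm (fun i => A i j) * |x j - x₀ j|) ^ 2 ≤
      (∑ i, ∑ j, A i j ^ 2) * (l2sq (y - y₀) + l2sq (x - x₀))) := by
  constructor
  · have hrow : ∀ i, p i * l2sq (Gx i - fun k => ∑ i', A i' k * y₀ i')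
        = (l2norm (A i) * |y i - y₀ i|) * ∑ i', l2norm (A i') * |y i' - y₀ i'| := by
      intro i
      have hdiff : (Gx i - fun k => ∑ i', A i' k * y₀ i')
          = ((y i - y₀ i) / p i) • A i := by
        funext k; simp [hGx i]
      rw [hdiff, l2sq_smul, hp i]
      simp only [l2norm_eq]
      exact key_term (fun i => l2sq (A i)) (fun i => l2sq_nonneg _)
        (fun i => y i - y₀ i) i
    have hcol : ∀ j, q j * l2sq (Gy j - fun i' => -∑ j', A i' j' * x₀ j')
        = (l2norm (fun i => A i j) * |x j - x₀ j|) *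
          ∑ j', l2norm (fun i => A i j') * |x j' - x₀ j'| := by
      intro j
      have hdiff : (Gy j - fun i' => -∑ j', A i' j' * x₀ j')
          = (-((x j - x₀ j) / q j)) • (fun i => A i j) := by
        funext i; simp [hGy j]; ring
      rw [hdiff, l2sq_smul, neg_sq, hq j]
      simp only [l2norm_eq]
      exact key_term (fun j => l2sq (fun i => A i j)) (fun j => l2sq_nonneg _)
        (fun j => x j - x₀ j) j
    simp only [hrow, hcol, ← Finset.sum_mul]
    ring
  · have csY : (∑ i, l2norm (A i) * |y i - y₀ i|) ^ 2 ≤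
        (∑ i, ∑ j, A i j ^ 2) * l2sq (y - y₀) := by
      have h := Finset.sum_mul_sq_le_sq_mul_sq Finset.univ
        (fun i => l2norm (A i)) (fun i => |y i - y₀ i|)
      have h1 : ∀ i : Fin m, l2norm (A i) ^ 2 = ∑ j, A i j ^ 2 := fun i =>
        Real.sq_sqrt (Finset.sum_nonneg fun _ _ => sq_nonneg _)
      simpa [h1, sq_abs, l2sq] using h
    have csX : (∑ j, l2norm (fun i => A i j) * |x j - x₀ j|) ^ 2 ≤
        (∑ i, ∑ j, A i j ^ 2) * l2sq (x - x₀) := by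
      have h := Finset.sum_mul_sq_le_sq_mul_sq Finset.univ
        (fun j => l2norm (fun i => A i j)) (fun j => |x j - x₀ j|)
      have h1 : ∀ j : Fin n, l2norm (fun i => A i j) ^ 2 = ∑ i, A i j ^ 2 := fun j =>
        Real.sq_sqrt (Finset.sum_nonneg fun _ _ => sq_nonneg _)
      have hcomm : (∑ j : Fin n, ∑ i : Fin m, A i j ^ 2)
          = ∑ i : Fin m, ∑ j : Fin n, A i j ^ 2 := Finset.sum_comm
      simpa [h1, sq_abs, l2sq, hcomm] using h
    have := mul_add (∑ i, ∑ j, A i j ^ 2) (l2sq (y - y₀)) (l2sq (x - x₀))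
    linarith
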